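/- Suppose a sequence of discrete probability-type measures μ_m = (1/m^n) ∑_α d_{m,α} δ_{(x_{m,α}, y_{m,α})} on R² (with d_{m,α} ≥ 0) converges weakly to a Radon measure μ, supported in the region {(x,y) : x ≥ −A, |y| ≤ Ax + B}, with uniform bound μ_m({x ≤ λ}) ≤ C(λ+1)^n. Then lim_m ∫ y e^{−x} dμ_m = ∫ y e^{−x} dμ, and both sides are finite. -/

import Mathlib

open MeasureTheory Filter

lemma sumSeries (n : ℕ) : Summable (fun ℓ : ℕ => ((ℓ : ℝ)+1)^n * Real.exp (-(ℓ:ℝ)/8)) := by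
  have hr : ‖Real.exp (-(1:ℝ)/8)‖ < 1 := by
    rw [Real.norm_eq_abs, abs_of_pos (Real.exp_pos _)]
    exact Real.exp_lt_one_iff.2 (by norm_num)
  have h := summable_pow_mul_geometric_of_norm_lt_one (R := ℝ) n hr
  have h2 := (summable_nat_add_iff 1).2 h
  have h3 := h2.mul_left (Real.exp (-(1:ℝ)/8))⁻¹
  refine h3.congr fun ℓ => ?_
  have hne : Real.exp (-(1:ℝ)/8) ≠ 0 := (Real.exp_pos _).ne'
  push_cast
  rw [← Real.exp_nat_mul]
  push_cast
  rw [show ((ℓ:ℝ)+1) * (-1/8) = (-1/8) + (-(ℓ:ℝ)/8) by ring, Real.exp_add]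
  field_simp

lemma key_bd {A B x : ℝ} (hA : 0 < A) (hB : 0 < B) (hx : -A ≤ x) :
    A*x + B ≤ (4*A/3+B) * Real.exp (3*A/4) * Real.exp (3*x/4) := by
  have h1 : 3*(x+A)/4 + 1 ≤ Real.exp (3*(x+A)/4) := Real.add_one_le_exp _
  have h2 : Real.exp (3*(x+A)/4) = Real.exp (3*A/4) * Real.exp (3*x/4) := by
    rw [← Real.exp_add]; ring_nf
  rw [mul_assoc, ← h2]
  nlinarith [Real.exp_pos (3*(x+A)/4), mul_le_mul_of_nonneg_left h1 hA.le,
    mul_le_mul_of_nonneg_left h1 hB.le]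

noncomputable def cutf (A B : ℝ) (r : ℕ) (p : ℝ × ℝ) : ℝ :=
  (max 0 (min 1 (min ((r:ℝ)+1-p.1) (p.1+A+1)))) * (max 0 (min 1 (A*r+B+1-|p.2|)))

lemma cutf_cont (A B : ℝ) (r : ℕ) : Continuous (cutf A B r) := by
  unfold cutf
  fun_prop

lemma cutf_nonneg (A B : ℝ) (r : ℕ) (p : ℝ × ℝ) : 0 ≤ cutf A B r p :=
  mul_nonneg (le_max_left _ _) (le_max_left _ _)

lemma cutf_le_one (A B : ℝ) (r : ℕ) (p : ℝ × ℝ) : cutf A B r p ≤ 1 :=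
  mul_le_one₀ (max_le zero_le_one (min_le_left _ _)) (le_max_left _ _)
    (max_le zero_le_one (min_le_left _ _))

lemma cutf_eq_one {A B : ℝ} (hA : 0 < A) (r : ℕ) {p : ℝ × ℝ}
    (h1 : -A ≤ p.1) (h2 : |p.2| ≤ A * p.1 + B) (hx : p.1 ≤ r) : cutf A B r p = 1 := by
  unfold cutf
  have e1 : min ((r:ℝ)+1-p.1) (p.1+A+1) ≥ 1 := le_min (by linarith) (by linarith)
  have e2 : A*r+B+1-|p.2| ≥ 1 := by nlinarith
  rw [min_eq_left e1, min_eq_left e2]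
  norm_num

lemma cutf_mono (A B : ℝ) (hA : 0 < A) {r r' : ℕ} (h : r ≤ r') (p : ℝ × ℝ) :
    cutf A B r p ≤ cutf A B r' p := by
  have hr : (r:ℝ) ≤ r' := Nat.cast_le.2 h
  unfold cutf
  apply mul_le_mul
  · exact max_le_max le_rfl (min_le_min le_rfl (min_le_min (by linarith) le_rfl))
  · exact max_le_max le_rfl (min_le_min le_rfl (by nlinarith))
  · exact le_max_left _ _
  · exact le_max_left _ _

lemma cutf_zero_outside (A B : ℝ) (r : ℕ) (p : ℝ × ℝ)
    (hp : p ∉ Set.Icc (-A-1) ((r:ℝ)+1) ×ˢ Set.Icc (-(A*r+B+1)) (A*r+B+1)) :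
    cutf A B r p = 0 := by
  rw [Set.mem_prod, Set.mem_Icc, Set.mem_Icc, not_and_or, not_and_or, not_and_or] at hp
  unfold cutf
  rcases hp with (h | h) | h
  · push_neg at h
    have : min ((r:ℝ)+1-p.1) (p.1+A+1) ≤ 0 := le_trans (min_le_right _ _) (by linarith)
    rw [max_eq_left (le_trans (min_le_right _ _) this), zero_mul]
  · push_neg at h
    have : min ((r:ℝ)+1-p.1) (p.1+A+1) ≤ 0 := le_trans (min_le_left _ _) (by linarith)
    rw [max_eq_left (le_trans (min_le_right _ _) this), zero_mul]
  · have habs : A*r+B+1-|p.2| ≤ 0 := by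
      rcases h with h | h
      · push_neg at h
        have := neg_le_abs p.2
        linarith
      · push_neg at h
        have := le_abs_self p.2
        linarith
    rw [max_eq_left (le_trans (min_le_right _ _) habs), mul_zero]

noncomputable def MrB (n : ℕ) (A C : ℝ) : ℝ :=
  ∑' ℓ : ℕ, Real.exp ((1+A)/8) * (C * (((ℓ:ℝ)+1)^n * Real.exp (-(ℓ:ℝ)/8)))

lemma MrB_nonneg (n : ℕ) (A C : ℝ) (hC : 0 ≤ C) : 0 ≤ MrB n A C :=
  tsum_nonneg fun ℓ => by positivity

lemma summable_MrB (n : ℕ) (A C : ℝ) :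
    Summable (fun ℓ : ℕ => Real.exp ((1+A)/8) * (C * (((ℓ:ℝ)+1)^n * Real.exp (-(ℓ:ℝ)/8)))) :=
  ((sumSeries n).mul_left C).mul_left _

lemma Wmeas : Measurable fun p : ℝ × ℝ => ENNReal.ofReal (Real.exp (-p.1/8)) := by
  exact (ENNReal.continuous_ofReal.comp
    (Real.continuous_exp.comp ((continuous_fst.neg).div_const 8))).measurable

lemma moment_bound (n : ℕ) (A B C : ℝ) (hA : 0 < A) (hC : 0 < C)
    (m : ℕ) (hm : 1 ≤ m) (μm : Measure (ℝ × ℝ))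
    (hd : ∃ (k : ℕ) (d : Fin k → NNReal) (pt : Fin k → ℝ × ℝ),
      μm = (ENNReal.ofReal (1 / (m : ℝ) ^ n)) • ∑ j, (d j : ENNReal) • Measure.dirac (pt j))
    (hsupp : μm {p : ℝ × ℝ | ¬ (p.1 ≥ -A ∧ |p.2| ≤ A * p.1 + B)} = 0)
    (hbound : ∀ lam ≥ (0:ℝ), μm {p : ℝ × ℝ | p.1 ≤ lam} ≤ ENNReal.ofReal (C * (lam + 1) ^ n)) :
    ∫⁻ p, ENNReal.ofReal (Real.exp (-p.1/8)) ∂μm ≤ ENNReal.ofReal (MrB n A C) := by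
  obtain ⟨k, d, pt, hμm⟩ := hd
  set c₀ : ENNReal := ENNReal.ofReal (1 / (m : ℝ) ^ n) with hc₀
  have hc₀ne : c₀ ≠ 0 := by
    rw [hc₀]
    simp only [ne_eq, ENNReal.ofReal_eq_zero, not_le]
    positivity
  -- the support set is closed, its complement measurable
  have hSclosed : IsClosed {p : ℝ × ℝ | p.1 ≥ -A ∧ |p.2| ≤ A * p.1 + B} := by
    apply IsClosed.inter
    · exact isClosed_le continuous_const continuous_fst
    · exact isClosed_le (continuous_abs.comp continuous_snd)
        ((continuous_const.mul continuous_fst).add continuous_const)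
  have hNmeas : MeasurableSet {p : ℝ × ℝ | ¬ (p.1 ≥ -A ∧ |p.2| ≤ A * p.1 + B)} :=
    hSclosed.measurableSet.compl
  -- each dirac point with nonzero mass lies in the support region
  have hj : ∀ j : Fin k, d j = 0 ∨ ((pt j).1 ≥ -A ∧ |(pt j).2| ≤ A * (pt j).1 + B) := by
    intro j
    by_contra hcon
    rw [not_or] at hcon
    obtain ⟨hd0, hptS⟩ := hcon
    have h0 := hsupp
    rw [hμm, Measure.smul_apply, smul_eq_mul] at h0
    rcases mul_eq_zero.1 h0 with h | h
    · exact hc₀ne h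
    · rw [Measure.finset_sum_apply] at h
      have := (Finset.sum_eq_zero_iff.1 h) j (Finset.mem_univ j)
      rw [Measure.smul_apply, smul_eq_mul] at this
      rcases mul_eq_zero.1 this with h' | h'
      · exact hd0 (by exact_mod_cast h')
      · rw [Measure.dirac_apply' _ hNmeas, Set.indicator_apply] at h'
        simp only [Set.mem_setOf_eq] at h'
        rw [if_pos hptS] at h'
        simp at h'
  set σ : Fin k → ℕ := fun j => (⌈(pt j).1 + A⌉).toNat with hσ
  have hσcast : ∀ j : Fin k, (pt j).1 ≥ -A → ((σ j : ℕ) : ℝ) = ((⌈(pt j).1 + A⌉ : ℤ) : ℝ) := by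
    intro j hx
    have h3 : (0:ℤ) ≤ ⌈(pt j).1 + A⌉ := Int.ceil_nonneg (by linarith)
    rw [hσ, ← Int.toNat_of_nonneg h3]
    push_cast
    ring
  have h1 : ∫⁻ p, ENNReal.ofReal (Real.exp (-p.1/8)) ∂μm
      = c₀ * ∑ j, (d j : ENNReal) * ENNReal.ofReal (Real.exp (-(pt j).1/8)) := by
    rw [hμm, lintegral_smul_measure, lintegral_finset_sum_measure]
    simp_rw [lintegral_smul_measure, lintegral_dirac' _ Wmeas]
    simp only [smul_eq_mul]
  have hshell : ∀ ℓ : ℕ, c₀ * ∑ j ∈ Finset.univ.filter (fun j => σ j = ℓ), (d j : ENNReal)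
      ≤ ENNReal.ofReal (C * ((ℓ:ℝ) + 1) ^ n) := by
    intro ℓ
    have hsub : MeasurableSet {p : ℝ × ℝ | p.1 ≤ (ℓ:ℝ)} :=
      measurableSet_le continuous_fst.measurable measurable_const
    have hmeasval : μm {p : ℝ × ℝ | p.1 ≤ (ℓ:ℝ)}
        = c₀ * ∑ j, (d j : ENNReal) * (Measure.dirac (pt j)) {p : ℝ × ℝ | p.1 ≤ (ℓ:ℝ)} := by
      rw [hμm, Measure.smul_apply, Measure.finset_sum_apply, smul_eq_mul]
      simp_rw [Measure.smul_apply, smul_eq_mul]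
    have hle : ∑ j ∈ Finset.univ.filter (fun j => σ j = ℓ), (d j : ENNReal)
        ≤ ∑ j, (d j : ENNReal) * (Measure.dirac (pt j)) {p : ℝ × ℝ | p.1 ≤ (ℓ:ℝ)} := by
      refine le_trans (Finset.sum_le_sum ?_)
        (Finset.sum_le_sum_of_subset_of_nonneg (Finset.filter_subset _ _)
          (fun _ _ _ => zero_le))
      intro j hjf
      rcases hj j with h0 | hS
      · simp [h0]
      · have hmem := (Finset.mem_filter.1 hjf).2
        have hx : (pt j).1 ≤ (ℓ:ℝ) := by
          have h2 : (pt j).1 + A ≤ ((⌈(pt j).1 + A⌉ : ℤ) : ℝ) := Int.le_ceil _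
          have h4 := hσcast j hS.1
          rw [hmem] at h4
          linarith
        have hdi : (Measure.dirac (pt j)) {p : ℝ × ℝ | p.1 ≤ (ℓ:ℝ)} = 1 := by
          rw [Measure.dirac_apply' _ hsub, Set.indicator_apply]
          simp only [Set.mem_setOf_eq]
          rw [if_pos hx]
          rfl
        rw [hdi, mul_one]
    calc c₀ * ∑ j ∈ Finset.univ.filter (fun j => σ j = ℓ), (d j : ENNReal)
        ≤ μm {p : ℝ × ℝ | p.1 ≤ (ℓ:ℝ)} := by rw [hmeasval]; exact mul_le_mul' le_rfl hle
      _ ≤ ENNReal.ofReal (C * ((ℓ:ℝ) + 1) ^ n) := hbound ℓ (Nat.cast_nonneg ℓ)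
  have hwj : ∀ j : Fin k, (d j : ENNReal) * ENNReal.ofReal (Real.exp (-(pt j).1/8))
      ≤ (d j : ENNReal) * (ENNReal.ofReal (Real.exp ((1+A)/8))
          * ENNReal.ofReal (Real.exp (-((σ j : ℕ):ℝ)/8))) := by
    intro j
    rcases hj j with h0 | hS
    · simp [h0]
    · refine mul_le_mul' le_rfl ?_
      rw [← ENNReal.ofReal_mul (Real.exp_pos _).le, ← Real.exp_add]
      apply ENNReal.ofReal_le_ofReal
      apply Real.exp_le_exp.2
      have h4 := hσcast j hS.1
      have h5 : ((⌈(pt j).1 + A⌉ : ℤ) : ℝ) < (pt j).1 + A + 1 := Int.ceil_lt_add_one _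
      rw [h4]
      linarith
  set T : Finset ℕ := Finset.image σ Finset.univ with hT
  have hgroup : ∑ j, (d j : ENNReal) * ENNReal.ofReal (Real.exp (-((σ j:ℕ):ℝ)/8))
      = ∑ ℓ ∈ T, ENNReal.ofReal (Real.exp (-(ℓ:ℝ)/8))
          * ∑ j ∈ Finset.univ.filter (fun j => σ j = ℓ), (d j : ENNReal) := by
    rw [← Finset.sum_fiberwise_of_maps_to
      (fun j _ => Finset.mem_image_of_mem σ (Finset.mem_univ j))
      (fun j => (d j : ENNReal) * ENNReal.ofReal (Real.exp (-((σ j:ℕ):ℝ)/8)))]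
    refine Finset.sum_congr rfl fun ℓ hℓ => ?_
    rw [Finset.mul_sum]
    refine Finset.sum_congr rfl fun j hjf => ?_
    rw [(Finset.mem_filter.1 hjf).2]
    ring
  calc ∫⁻ p, ENNReal.ofReal (Real.exp (-p.1/8)) ∂μm
      = c₀ * ∑ j, (d j : ENNReal) * ENNReal.ofReal (Real.exp (-(pt j).1/8)) := h1
    _ ≤ c₀ * ∑ j, (d j : ENNReal) * (ENNReal.ofReal (Real.exp ((1+A)/8))
          * ENNReal.ofReal (Real.exp (-((σ j : ℕ):ℝ)/8))) :=
        mul_le_mul' le_rfl (Finset.sum_le_sum fun j _ => hwj j)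
    _ = ENNReal.ofReal (Real.exp ((1+A)/8)) * ∑ ℓ ∈ T,
          ENNReal.ofReal (Real.exp (-(ℓ:ℝ)/8))
          * (c₀ * ∑ j ∈ Finset.univ.filter (fun j => σ j = ℓ), (d j : ENNReal)) := by
        have e1 : ∑ j, (d j : ENNReal) * (ENNReal.ofReal (Real.exp ((1+A)/8))
            * ENNReal.ofReal (Real.exp (-((σ j : ℕ):ℝ)/8)))
            = ENNReal.ofReal (Real.exp ((1+A)/8))
              * ∑ j, (d j : ENNReal) * ENNReal.ofReal (Real.exp (-((σ j:ℕ):ℝ)/8)) := by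
          rw [Finset.mul_sum]
          exact Finset.sum_congr rfl fun j _ => by ring
        rw [e1, hgroup, Finset.mul_sum, Finset.mul_sum, Finset.mul_sum]
        exact Finset.sum_congr rfl fun ℓ _ => by ring
    _ ≤ ENNReal.ofReal (Real.exp ((1+A)/8)) * ∑ ℓ ∈ T,
          ENNReal.ofReal (Real.exp (-(ℓ:ℝ)/8)) * ENNReal.ofReal (C * ((ℓ:ℝ) + 1) ^ n) :=
        mul_le_mul' le_rfl (Finset.sum_le_sum fun ℓ _ => mul_le_mul' le_rfl (hshell ℓ))
    _ = ∑ ℓ ∈ T, ENNReal.ofReal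
          (Real.exp ((1+A)/8) * (C * (((ℓ:ℝ)+1)^n * Real.exp (-(ℓ:ℝ)/8)))) := by
        rw [Finset.mul_sum]
        refine Finset.sum_congr rfl fun ℓ _ => ?_
        rw [← ENNReal.ofReal_mul (Real.exp_pos _).le,
          ← ENNReal.ofReal_mul (Real.exp_pos _).le]
        congr 1
        ring
    _ ≤ ∑' ℓ : ℕ, ENNReal.ofReal
          (Real.exp ((1+A)/8) * (C * (((ℓ:ℝ)+1)^n * Real.exp (-(ℓ:ℝ)/8)))) :=
        ENNReal.sum_le_tsum T
    _ = ENNReal.ofReal (MrB n A C) := by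
        rw [MrB, ENNReal.ofReal_tsum_of_nonneg (fun ℓ => by positivity) (summable_MrB n A C)]
/-- Convergence of the first moment ∫ y e^{−x} for discrete measures on ℝ² converging
weakly to a Radon measure supported in {x ≥ −A, |y| ≤ Ax + B}, with uniform polynomial
sublevel mass bounds. -/
theorem stmt_11 (n : ℕ) (A B C : ℝ) (hA : 0 < A) (hB : 0 < B) (hC : 0 < C)
    (μ : ℕ → Measure (ℝ × ℝ)) (ν : Measure (ℝ × ℝ)) [IsLocallyFiniteMeasure ν]
    (hdisc : ∀ m : ℕ, 1 ≤ m → ∃ (k : ℕ) (d : Fin k → NNReal) (pt : Fin k → ℝ × ℝ),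
      μ m = (ENNReal.ofReal (1 / (m : ℝ) ^ n)) • ∑ j, (d j : ENNReal) • Measure.dirac (pt j))
    (hsupp : ∀ m, (μ m) {p : ℝ × ℝ | ¬ (p.1 ≥ -A ∧ |p.2| ≤ A * p.1 + B)} = 0)
    (hsuppν : ν {p : ℝ × ℝ | ¬ (p.1 ≥ -A ∧ |p.2| ≤ A * p.1 + B)} = 0)
    (hbound : ∀ m : ℕ, 1 ≤ m → ∀ lam ≥ (0 : ℝ),
      (μ m) {p : ℝ × ℝ | p.1 ≤ lam} ≤ ENNReal.ofReal (C * (lam + 1) ^ n))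
    (hweak : ∀ f : ℝ × ℝ → ℝ, Continuous f → HasCompactSupport f →
      Tendsto (fun m => ∫ p, f p ∂(μ m)) atTop (nhds (∫ p, f p ∂ν))) :
    (∀ m : ℕ, 1 ≤ m → Integrable (fun p : ℝ × ℝ => p.2 * Real.exp (-p.1)) (μ m)) ∧
    Integrable (fun p : ℝ × ℝ => p.2 * Real.exp (-p.1)) ν ∧
    Tendsto (fun m => ∫ p : ℝ × ℝ, p.2 * Real.exp (-p.1) ∂(μ m)) atTop
      (nhds (∫ p : ℝ × ℝ, p.2 * Real.exp (-p.1) ∂ν)) := by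
  set f : ℝ × ℝ → ℝ := fun p => p.2 * Real.exp (-p.1) with hf
  set W : ℝ × ℝ → ℝ := fun p => Real.exp (-p.1/8) with hW
  have hWnn : ∀ p, 0 ≤ W p := fun p => (Real.exp_pos _).le
  have hWcont : Continuous W := Real.continuous_exp.comp (continuous_fst.neg.div_const 8)
  have hfcont : Continuous f := continuous_snd.mul (Real.continuous_exp.comp continuous_fst.neg)
  set K₀ : ℝ := (4*A/3+B) * Real.exp (3*A/4) with hK₀
  have hK₀pos : 0 < K₀ := by positivity
  set K₁ : ℝ := K₀ * Real.exp (A/8) with hK₁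
  have hK₁pos : 0 < K₁ := by positivity
  set Mr : ℝ := MrB n A C with hMrdef
  have hMr0 : 0 ≤ Mr := MrB_nonneg n A C hC.le
  -- pointwise bound on the support region
  have hfS : ∀ p : ℝ × ℝ, p.1 ≥ -A → |p.2| ≤ A * p.1 + B →
      |f p| ≤ K₀ * Real.exp (-p.1/4) := by
    intro p h1 h2
    have hk := key_bd hA hB h1
    calc |f p| = |p.2| * Real.exp (-p.1) := by
          simp only [hf]; rw [abs_mul, Real.abs_exp]
      _ ≤ (A * p.1 + B) * Real.exp (-p.1) :=
          mul_le_mul_of_nonneg_right h2 (Real.exp_pos _).le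
      _ ≤ ((4*A/3+B) * Real.exp (3*A/4) * Real.exp (3*p.1/4)) * Real.exp (-p.1) :=
          mul_le_mul_of_nonneg_right hk (Real.exp_pos _).le
      _ = K₀ * Real.exp (-p.1/4) := by
          simp only [hK₀]
          rw [mul_assoc, ← Real.exp_add]
          ring_nf
  have hfW : ∀ p : ℝ × ℝ, p.1 ≥ -A → |p.2| ≤ A * p.1 + B → |f p| ≤ K₁ * W p := by
    intro p h1 h2
    refine le_trans (hfS p h1 h2) ?_
    have hee : Real.exp (-p.1/4) ≤ Real.exp (A/8 + -p.1/8) := Real.exp_le_exp.2 (by linarith)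
    calc K₀ * Real.exp (-p.1/4) ≤ K₀ * Real.exp (A/8 + -p.1/8) :=
          mul_le_mul_of_nonneg_left hee hK₀pos.le
      _ = K₁ * W p := by simp only [hK₁, hW]; rw [Real.exp_add]; ring
  have htail : ∀ (r : ℕ) (p : ℝ × ℝ), p.1 ≥ -A → |p.2| ≤ A * p.1 + B → (r:ℝ) ≤ p.1 →
      |f p| ≤ K₀ * Real.exp (-(r:ℝ)/8) * W p := by
    intro r p h1 h2 hr
    refine le_trans (hfS p h1 h2) ?_
    have hee : Real.exp (-p.1/4) ≤ Real.exp (-(r:ℝ)/8 + -p.1/8) :=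
      Real.exp_le_exp.2 (by linarith)
    calc K₀ * Real.exp (-p.1/4) ≤ K₀ * Real.exp (-(r:ℝ)/8 + -p.1/8) :=
          mul_le_mul_of_nonneg_left hee hK₀pos.le
      _ = K₀ * Real.exp (-(r:ℝ)/8) * W p := by simp only [hW]; rw [Real.exp_add]; ring
  have hMom : ∀ m : ℕ, 1 ≤ m →
      ∫⁻ p, ENNReal.ofReal (W p) ∂(μ m) ≤ ENNReal.ofReal Mr := fun m hm =>
    moment_bound n A B C hA hC m hm (μ m) (hdisc m hm) (hsupp m) (hbound m hm)
  have hae : ∀ m : ℕ, ∀ᵐ p ∂(μ m), p.1 ≥ -A ∧ |p.2| ≤ A * p.1 + B := fun m =>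
    ae_iff.2 (hsupp m)
  have hνae : ∀ᵐ p ∂ν, p.1 ≥ -A ∧ |p.2| ≤ A * p.1 + B := ae_iff.2 hsuppν
  -- generic integrability given a moment bound
  have hIntGen : ∀ ρ : Measure (ℝ × ℝ),
      (∀ᵐ p ∂ρ, p.1 ≥ -A ∧ |p.2| ≤ A * p.1 + B) →
      (∫⁻ p, ENNReal.ofReal (W p) ∂ρ ≤ ENNReal.ofReal Mr) → Integrable f ρ := by
    intro ρ hρae hρmom
    refine ⟨hfcont.aestronglyMeasurable, ?_⟩
    rw [hasFiniteIntegral_iff_norm]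
    calc ∫⁻ p, ENNReal.ofReal ‖f p‖ ∂ρ
        ≤ ∫⁻ p, ENNReal.ofReal (K₁ * W p) ∂ρ := by
          refine lintegral_mono_ae (hρae.mono fun p hp => ?_)
          exact ENNReal.ofReal_le_ofReal (by
            rw [Real.norm_eq_abs]; exact hfW p hp.1 hp.2)
      _ = ENNReal.ofReal K₁ * ∫⁻ p, ENNReal.ofReal (W p) ∂ρ := by
          simp_rw [ENNReal.ofReal_mul hK₁pos.le]
          exact lintegral_const_mul' _ _ ENNReal.ofReal_ne_top
      _ ≤ ENNReal.ofReal K₁ * ENNReal.ofReal Mr := mul_le_mul' le_rfl hρmom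
      _ < ⊤ := ENNReal.mul_lt_top ENNReal.ofReal_lt_top ENNReal.ofReal_lt_top
  have hInt : ∀ m : ℕ, 1 ≤ m → Integrable f (μ m) := fun m hm =>
    hIntGen (μ m) (hae m) (hMom m hm)
  -- compact support of the cutoffs
  have hcs_cut : ∀ r : ℕ, HasCompactSupport (cutf A B r) := fun r =>
    HasCompactSupport.intro (isCompact_Icc.prod isCompact_Icc) (cutf_zero_outside A B r)
  -- uniform bound for ∫ W·cut dμ m
  have hWcutμ : ∀ (r : ℕ) (m : ℕ), 1 ≤ m →
      ∫ p, W p * cutf A B r p ∂(μ m) ≤ Mr := by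
    intro r m hm
    have hint : Integrable (fun p => W p * cutf A B r p) (μ m) := by
      refine ⟨(hWcont.mul (cutf_cont A B r)).aestronglyMeasurable, ?_⟩
      rw [hasFiniteIntegral_iff_norm]
      calc ∫⁻ p, ENNReal.ofReal ‖W p * cutf A B r p‖ ∂(μ m)
          ≤ ∫⁻ p, ENNReal.ofReal (W p) ∂(μ m) := by
            refine lintegral_mono fun p => ENNReal.ofReal_le_ofReal ?_
            rw [Real.norm_eq_abs, abs_mul, abs_of_nonneg (hWnn p),
              abs_of_nonneg (cutf_nonneg A B r p)]
            exact mul_le_of_le_one_right (hWnn p) (cutf_le_one A B r p)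
        _ ≤ ENNReal.ofReal Mr := hMom m hm
        _ < ⊤ := ENNReal.ofReal_lt_top
    rw [← ENNReal.ofReal_le_ofReal_iff hMr0,
      ofReal_integral_eq_lintegral_ofReal hint
        (Filter.Eventually.of_forall fun p =>
          mul_nonneg (hWnn p) (cutf_nonneg A B r p))]
    calc ∫⁻ p, ENNReal.ofReal (W p * cutf A B r p) ∂(μ m)
        ≤ ∫⁻ p, ENNReal.ofReal (W p) ∂(μ m) := by
          refine lintegral_mono fun p => ENNReal.ofReal_le_ofReal ?_
          exact mul_le_of_le_one_right (hWnn p) (cutf_le_one A B r p)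
      _ ≤ ENNReal.ofReal Mr := hMom m hm
  -- moment bound for ν via weak convergence and monotone convergence
  have hMomν : ∫⁻ p, ENNReal.ofReal (W p) ∂ν ≤ ENNReal.ofReal Mr := by
    set g : ℕ → ℝ × ℝ → ENNReal := fun r p => ENNReal.ofReal (W p * cutf A B r p) with hg
    have hmeas_g : ∀ r, Measurable (g r) := fun r =>
      (ENNReal.continuous_ofReal.comp (hWcont.mul (cutf_cont A B r))).measurable
    have hmono_g : Monotone g := by
      intro r r' hrr'
      intro p
      exact ENNReal.ofReal_le_ofReal
        (mul_le_mul_of_nonneg_left (cutf_mono A B hA hrr' p) (hWnn p))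
    have hsupeq : ∫⁻ p, ENNReal.ofReal (W p) ∂ν = ∫⁻ p, ⨆ r, g r p ∂ν := by
      refine lintegral_congr_ae (hνae.mono fun p hp => ?_)
      refine le_antisymm ?_ ?_
      · show ENNReal.ofReal (W p) ≤ ⨆ r, g r p
        have h1 : g ⌈p.1⌉₊ p = ENNReal.ofReal (W p) := by
          rw [hg]
          simp only
          rw [cutf_eq_one hA _ hp.1 hp.2 (Nat.le_ceil p.1), mul_one]
        rw [← h1]
        exact le_iSup (fun r => g r p) _
      · show (⨆ r, g r p) ≤ ENNReal.ofReal (W p)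
        refine iSup_le fun r => ENNReal.ofReal_le_ofReal ?_
        exact mul_le_of_le_one_right (hWnn p) (cutf_le_one A B r p)
    rw [hsupeq, lintegral_iSup hmeas_g hmono_g]
    refine iSup_le fun r => ?_
    have hcont : Continuous (fun p => W p * cutf A B r p) := hWcont.mul (cutf_cont A B r)
    have hcs : HasCompactSupport (fun p => W p * cutf A B r p) := (hcs_cut r).mul_left
    have hint : Integrable (fun p => W p * cutf A B r p) ν :=
      hcont.integrable_of_hasCompactSupport hcs
    rw [hg]
    simp only
    rw [← ofReal_integral_eq_lintegral_ofReal hint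
      (Filter.Eventually.of_forall fun p => mul_nonneg (hWnn p) (cutf_nonneg A B r p))]
    refine ENNReal.ofReal_le_ofReal ?_
    refine le_of_tendsto (hweak _ hcont hcs) ?_
    filter_upwards [eventually_ge_atTop 1] with m hm
    exact hWcutμ r m hm
  have hIntν : Integrable f ν := hIntGen ν hνae hMomν
  refine ⟨hInt, hIntν, ?_⟩
  -- tail estimate, for any measure with the support and moment properties
  have hTailGen : ∀ (r : ℕ) (ρ : Measure (ℝ × ℝ)),
      (∀ᵐ p ∂ρ, p.1 ≥ -A ∧ |p.2| ≤ A * p.1 + B) →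
      (∫⁻ p, ENNReal.ofReal (W p) ∂ρ ≤ ENNReal.ofReal Mr) → Integrable f ρ →
      |∫ p, f p ∂ρ - ∫ p, f p * cutf A B r p ∂ρ| ≤ K₀ * Real.exp (-(r:ℝ)/8) * Mr := by
    intro r ρ hρae hρmom hρint
    have hIG : Integrable (fun p => f p * cutf A B r p) ρ := by
      refine hρint.mono ((hfcont.mul (cutf_cont A B r)).aestronglyMeasurable) ?_
      refine Filter.Eventually.of_forall fun p => ?_
      rw [Real.norm_eq_abs, Real.norm_eq_abs, abs_mul]
      exact mul_le_of_le_one_right (abs_nonneg _)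
        (abs_le.2 ⟨by linarith [cutf_nonneg A B r p], cutf_le_one A B r p⟩)
    rw [← integral_sub hρint hIG]
    have hnn : 0 ≤ K₀ * Real.exp (-(r:ℝ)/8) * Mr := by positivity
    have h1 : |∫ p, (f p - f p * cutf A B r p) ∂ρ|
        ≤ ∫ p, ‖f p - f p * cutf A B r p‖ ∂ρ := by
      rw [← Real.norm_eq_abs]
      exact norm_integral_le_integral_norm _
    refine le_trans h1 ?_
    have hsub : Integrable (fun p => f p - f p * cutf A B r p) ρ := hρint.sub hIG
    rw [← ENNReal.ofReal_le_ofReal_iff hnn]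
    have heq : ENNReal.ofReal (∫ p, ‖f p - f p * cutf A B r p‖ ∂ρ)
        = ∫⁻ p, ENNReal.ofReal ‖f p - f p * cutf A B r p‖ ∂ρ :=
      ofReal_integral_eq_lintegral_ofReal hsub.norm
        (Filter.Eventually.of_forall fun p => norm_nonneg _)
    rw [heq]
    calc ∫⁻ p, ENNReal.ofReal ‖f p - f p * cutf A B r p‖ ∂ρ
        ≤ ∫⁻ p, ENNReal.ofReal (K₀ * Real.exp (-(r:ℝ)/8) * W p) ∂ρ := by
          refine lintegral_mono_ae (hρae.mono fun p hp => ENNReal.ofReal_le_ofReal ?_)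
          rcases le_or_gt p.1 (r:ℝ) with hle | hgt
          · rw [cutf_eq_one hA _ hp.1 hp.2 hle, mul_one, sub_self, norm_zero]
            positivity
          · have : f p - f p * cutf A B r p = f p * (1 - cutf A B r p) := by ring
            rw [this, Real.norm_eq_abs, abs_mul]
            have h2 : |1 - cutf A B r p| ≤ 1 :=
              abs_le.2 ⟨by linarith [cutf_le_one A B r p], by linarith [cutf_nonneg A B r p]⟩
            calc |f p| * |1 - cutf A B r p| ≤ |f p| * 1 :=
                  mul_le_mul_of_nonneg_left h2 (abs_nonneg _)
              _ = |f p| := mul_one _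
              _ ≤ K₀ * Real.exp (-(r:ℝ)/8) * W p := htail r p hp.1 hp.2 hgt.le
      _ = ENNReal.ofReal (K₀ * Real.exp (-(r:ℝ)/8)) * ∫⁻ p, ENNReal.ofReal (W p) ∂ρ := by
          simp_rw [ENNReal.ofReal_mul (by positivity : (0:ℝ) ≤ K₀ * Real.exp (-(r:ℝ)/8))]
          exact lintegral_const_mul' _ _ ENNReal.ofReal_ne_top
      _ ≤ ENNReal.ofReal (K₀ * Real.exp (-(r:ℝ)/8)) * ENNReal.ofReal Mr :=
          mul_le_mul' le_rfl hρmom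
      _ = ENNReal.ofReal (K₀ * Real.exp (-(r:ℝ)/8) * Mr) :=
          (ENNReal.ofReal_mul (by positivity)).symm
  -- the tail goes to 0
  have hTail0 : Tendsto (fun r : ℕ => K₀ * Real.exp (-(r:ℝ)/8) * Mr) atTop (nhds 0) := by
    have h1 : Tendsto (fun r : ℕ => -((r:ℝ)/8)) atTop atBot :=
      tendsto_neg_atTop_atBot.comp
        (tendsto_natCast_atTop_atTop.atTop_div_const (by norm_num : (0:ℝ) < 8))
    have h2 : Tendsto (fun r : ℕ => Real.exp (-(r:ℝ)/8)) atTop (nhds 0) := by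
      have := Real.tendsto_exp_atBot.comp h1
      refine this.congr fun r => ?_
      simp [neg_div]
    have h3 := (h2.const_mul K₀).mul_const Mr
    simpa using h3
  -- final ε-argument
  rw [Metric.tendsto_atTop]
  intro ε hε
  have hε4 : 0 < ε/4 := by linarith
  obtain ⟨r, hr⟩ := (hTail0.eventually (gt_mem_nhds hε4)).exists
  have hcontG : Continuous (fun p => f p * cutf A B r p) := hfcont.mul (cutf_cont A B r)
  have hcsG : HasCompactSupport (fun p => f p * cutf A B r p) := (hcs_cut r).mul_left
  have hwk := hweak _ hcontG hcsG
  rw [Metric.tendsto_atTop] at hwk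
  obtain ⟨N, hN⟩ := hwk (ε/4) hε4
  refine ⟨max N 1, fun m hm => ?_⟩
  have hm1 : 1 ≤ m := le_trans (le_max_right N 1) hm
  have hmN : N ≤ m := le_trans (le_max_left N 1) hm
  have t1 := hTailGen r (μ m) (hae m) (hMom m hm1) (hInt m hm1)
  have t3 := hTailGen r ν hνae hMomν hIntν
  have t2 := hN m hmN
  rw [Real.dist_eq] at t2 ⊢
  set a1 := ∫ p, f p ∂(μ m) with ha1
  set a2 := ∫ p, f p * cutf A B r p ∂(μ m) with ha2
  set a3 := ∫ p, f p * cutf A B r p ∂ν with ha3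
  set a4 := ∫ p, f p ∂ν with ha4
  have t2' : |a2 - a3| < ε/4 := by
    simpa only [ha2, ha3] using t2
  have h12 := abs_sub_le a1 a2 a4
  have h23 := abs_sub_le a2 a3 a4
  have t3' : |a3 - a4| ≤ K₀ * Real.exp (-(r:ℝ)/8) * Mr := by
    rw [abs_sub_comm]; exact t3
  linarith [t1, t2', t3', hr, h12, h23]
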